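/- If f : GF(p)^{2m} → GF(p) is a feasible Latin square type function, then f is regular bent (W_f(x) = ζ^{f*(x)} p^m for all x for some dual f*); if f is of feasible negative Latin square type, then f is (-1)-weakly regular bent (W_f(x) = -ζ^{f*(x)} p^m for all x). -/

import Mathlib

open Finset BigOperators

noncomputable def zeta (p : ℕ) : ℂ := Complex.exp (2 * Real.pi * Complex.I / p)

def ip {p n : ℕ} (x y : Fin n → ZMod p) : ZMod p := ∑ i, x i * y i

noncomputable def walsh {p n : ℕ} [NeZero p]
    (f : (Fin n → ZMod p) → ZMod p) (x : Fin n → ZMod p) : ℂ :=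
  ∑ y, zeta p ^ (f y - ip x y).val

/-- The component Cayley graph `Γ_i` of `f` on `GF(p)^n`: distinct vertices `x, y` are
adjacent iff `x - y` lies in the connection set `D_i = {z ≠ 0 | f z = i}` (for an even `f`
the symmetrization in `fromRel` is harmless).  For `i ≠ 0` this set is `f⁻¹(i)`, and for
`i = 0` it is `f⁻¹(0) \ {0}`; i.e. `i = 0` plays the role of the index `p`. -/
def cayleyGraph {p n : ℕ} (f : (Fin n → ZMod p) → ZMod p) (i : ZMod p) :
    SimpleGraph (Fin n → ZMod p) :=
  SimpleGraph.fromRel (fun x y => f (x - y) = i)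

/-! ### Auxiliary machinery -/

lemma zeta_isPrimitiveRoot (p : ℕ) [NeZero p] : IsPrimitiveRoot (zeta p) p :=
  Complex.isPrimitiveRoot_exp p (NeZero.ne p)

/-- The standard additive character `a ↦ ζ_p^(a.val)` of `ZMod p`. -/
noncomputable def psi (p : ℕ) [NeZero p] : AddChar (ZMod p) ℂ :=
  AddChar.zmodChar p (zeta_isPrimitiveRoot p).pow_eq_one

lemma psi_apply (p : ℕ) [NeZero p] (a : ZMod p) : psi p a = zeta p ^ a.val :=
  AddChar.zmodChar_apply _ _

lemma psi_ne_one_of_ne_zero (p : ℕ) [Fact p.Prime] {a : ZMod p} (ha : a ≠ 0) :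
    psi p a ≠ 1 := by
  have hp1 : 1 < p := (Fact.out : p.Prime).one_lt
  haveI : NeZero p := ⟨by omega⟩
  rw [psi_apply]
  refine (zeta_isPrimitiveRoot p).pow_ne_one_of_pos_of_lt ?_ (ZMod.val_lt a)
  have : a.val ≠ 0 := fun h => ha ((ZMod.val_eq_zero a).mp h)
  omega

lemma psi_ne_one (p : ℕ) [Fact p.Prime] : psi p ≠ 1 := by
  haveI : NeZero p := ⟨(Fact.out : p.Prime).ne_zero⟩
  rw [AddChar.ne_one_iff]
  exact ⟨1, psi_ne_one_of_ne_zero p (by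
    have : (1 : ZMod p) ≠ 0 := one_ne_zero
    exact this)⟩

lemma sum_psi (p : ℕ) [Fact p.Prime] : ∑ a : ZMod p, psi p a = 0 := by
  haveI : NeZero p := ⟨(Fact.out : p.Prime).ne_zero⟩
  exact AddChar.sum_eq_zero_of_ne_one (psi_ne_one p)

/-- The inner product with a fixed `x` as an additive monoid hom. -/
def ipHom {p n : ℕ} (x : Fin n → ZMod p) : (Fin n → ZMod p) →+ ZMod p where
  toFun y := ip x y
  map_zero' := by simp [ip]
  map_add' y z := by
    simp [ip, mul_add, Finset.sum_add_distrib]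

/-- The additive character `y ↦ ζ_p^(⟨x,y⟩.val)` of `GF(p)^n`. -/
noncomputable def Psi {n : ℕ} (p : ℕ) [NeZero p] (x : Fin n → ZMod p) :
    AddChar (Fin n → ZMod p) ℂ := (psi p).compAddMonoidHom (ipHom x)

open Matrix

lemma Psi_apply {n : ℕ} (p : ℕ) [NeZero p] (x y : Fin n → ZMod p) :
    Psi p x y = psi p (ip x y) := rfl

lemma ip_single {p n : ℕ} (x : Fin n → ZMod p) (i : Fin n) :
    ip x (Pi.single i 1) = x i := by
  unfold ip
  rw [Finset.sum_eq_single i]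
  · simp
  · intro b _ hb; simp [Pi.single_apply, hb]
  · simp

lemma sum_Psi {n : ℕ} (p : ℕ) [Fact p.Prime] {x : Fin n → ZMod p} (hx : x ≠ 0) :
    ∑ y, Psi p x y = 0 := by
  haveI : NeZero p := ⟨(Fact.out : p.Prime).ne_zero⟩
  refine AddChar.sum_eq_zero_of_ne_one ?_
  rw [AddChar.ne_one_iff]
  obtain ⟨i, hi⟩ : ∃ i, x i ≠ 0 := by
    by_contra h
    push_neg at h
    exact hx (funext fun i => h i)
  refine ⟨Pi.single i 1, ?_⟩
  rw [Psi_apply, ip_single]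
  exact psi_ne_one_of_ne_zero p hi

open scoped Classical in
/-- If `f : GF(p)^{2m} → GF(p)` is a feasible Latin square type function,
then `f` is regular bent: `W_f(x) = ζ^{f*(x)} p^m` for all `x`, for some dual
`f* : GF(p)^{2m} → GF(p)`.  If `f` is of feasible negative Latin square type, then `f` is
`(-1)`-weakly regular bent: `W_f(x) = -ζ^{f*(x)} p^m` for all `x`. -/
theorem stmt13 (p m : ℕ) [Fact p.Prime] (hodd : p ≠ 2) (hm : 1 ≤ m)
    (f : (Fin (2 * m) → ZMod p) → ZMod p)
    (heven : ∀ x, f (-x) = f x) (h0 : f 0 = 0)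
    (N : ℤ) (hN : N = (p : ℤ) ^ m ∨ N = -((p : ℤ) ^ m))
    (R : ZMod p → ℤ)
    (hR : ∀ i : ZMod p, R i = if i = 0 then N / p + 1 else N / p)
    (hSRG : ∀ i : ZMod p, ∃ k l mu : ℕ,
      (k : ℤ) = (N - 1) * R i ∧ (l : ℤ) = N + R i ^ 2 - 3 * R i ∧
      (mu : ℤ) = R i ^ 2 - R i ∧
      (cayleyGraph f i).IsSRGWith (p ^ (2 * m)) k l mu) :
    (N = (p : ℤ) ^ m →
      ∃ fstar : (Fin (2 * m) → ZMod p) → ZMod p,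
        ∀ x, walsh f x = zeta p ^ (fstar x).val * (p : ℂ) ^ m) ∧
    (N = -((p : ℤ) ^ m) →
      ∃ fstar : (Fin (2 * m) → ZMod p) → ZMod p,
        ∀ x, walsh f x = -(zeta p ^ (fstar x).val * (p : ℂ) ^ m)) := by
  classical
  have hp : p.Prime := Fact.out
  haveI : NeZero p := ⟨hp.ne_zero⟩
  have hp1 : 1 < p := hp.one_lt
  -- basic facts about N
  have hNne : N ≠ 0 := by
    rcases hN with h | h <;> rw [h] <;> simp [pow_ne_zero, hp.ne_zero]
  have hNneC : (N : ℂ) ≠ 0 := Int.cast_ne_zero.mpr hNne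
  have hdvd : (p : ℤ) ∣ N := by
    rcases hN with h | h
    · rw [h]; exact dvd_pow_self _ (by omega)
    · rw [h]; exact (dvd_neg).mpr (dvd_pow_self _ (by omega))
  have hNdiv : (p : ℤ) * (N / p) = N := Int.mul_ediv_cancel' hdvd
  -- sum of the R j
  have hRsum : ∑ j : ZMod p, R j = N + 1 := by
    have : ∀ j : ZMod p, R j = N / p + (if j = 0 then 1 else 0) := by
      intro j; rw [hR]; split_ifs <;> ring
    rw [Finset.sum_congr rfl (fun j _ => this j), Finset.sum_add_distrib,
      Finset.sum_const, Finset.sum_ite_eq' Finset.univ (0 : ZMod p) (fun _ => (1 : ℤ))]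
    simp only [Finset.mem_univ, if_true, Finset.card_univ, ZMod.card]
    rw [nsmul_eq_mul]
    rw [hNdiv]
  -- sum of psi j * R j
  have hpsiR : ∑ j : ZMod p, psi p j * (R j : ℂ) = 1 := by
    have : ∀ j : ZMod p, psi p j * (R j : ℂ)
        = psi p j * ((N / p : ℤ) : ℂ) + (if j = 0 then 1 else 0) := by
      intro j
      rw [hR]
      split_ifs with h
      · subst h
        rw [AddChar.map_zero_eq_one]
        push_cast
        ring
      · ring
    rw [Finset.sum_congr rfl (fun j _ => this j), Finset.sum_add_distrib,
      ← Finset.sum_mul, sum_psi, Finset.sum_ite_eq' Finset.univ (0 : ZMod p) (fun _ => (1 : ℂ))]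
    simp
  -- the connection sets and the character sums over them
  set S : Finset (Fin (2 * m) → ZMod p) := Finset.univ.erase 0 with hS
  set D : ZMod p → Finset (Fin (2 * m) → ZMod p) := fun j => S.filter (fun z => f z = j) with hD
  have hmemD : ∀ (j : ZMod p) (z : Fin (2 * m) → ZMod p), z ∈ D j ↔ z ≠ 0 ∧ f z = j := by
    intro j z
    constructor
    · intro h
      obtain ⟨hz, hf⟩ := Finset.mem_filter.mp h
      exact ⟨(Finset.mem_erase.mp hz).1, hf⟩
    · rintro ⟨h1, h2⟩
      exact Finset.mem_filter.mpr ⟨Finset.mem_erase.mpr ⟨h1, Finset.mem_univ z⟩, h2⟩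
  set lam : (Fin (2 * m) → ZMod p) → ZMod p → ℂ := fun x j => ∑ d ∈ D j, Psi p x (-d) with hlam
  -- the Walsh transform in terms of the lam's
  have hwalsh : ∀ x : Fin (2 * m) → ZMod p, walsh f x = 1 + ∑ j : ZMod p, psi p j * lam x j := by
    intro x
    have step1 : walsh f x = ∑ y : Fin (2 * m) → ZMod p, psi p (f y) * Psi p x (-y) := by
      unfold walsh
      refine Finset.sum_congr rfl (fun y _ => ?_)
      have hneg : ip x (-y) = -(ip x y) := map_neg (ipHom x) y
      rw [← psi_apply, Psi_apply, hneg, sub_eq_add_neg, AddChar.map_add_eq_mul]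
    have step2 : ∑ y : Fin (2 * m) → ZMod p, psi p (f y) * Psi p x (-y)
        = psi p (f 0) * Psi p x (-0) + ∑ y ∈ S, psi p (f y) * Psi p x (-y) :=
      (Finset.add_sum_erase Finset.univ (fun y => psi p (f y) * Psi p x (-y))
        (Finset.mem_univ (0 : Fin (2 * m) → ZMod p))).symm
    have step3 : ∑ y ∈ S, psi p (f y) * Psi p x (-y)
        = ∑ j : ZMod p, psi p j * lam x j := by
      rw [← Finset.sum_fiberwise S (fun y => f y) (fun y => psi p (f y) * Psi p x (-y))]
      refine Finset.sum_congr rfl (fun j _ => ?_)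
      rw [hlam, Finset.mul_sum]
      refine Finset.sum_congr rfl (fun d hd => ?_)
      rw [Finset.mem_filter] at hd
      rw [hd.2]
    rw [step1, step2, step3, h0, neg_zero, AddChar.map_zero_eq_one,
      AddChar.map_zero_eq_one, one_mul]
  -- sum of the lam's over j for nonzero x
  have hlamsum : ∀ x : Fin (2 * m) → ZMod p, x ≠ 0 → ∑ j : ZMod p, lam x j = -1 := by
    intro x hx
    have h1 : ∑ j : ZMod p, lam x j = ∑ d ∈ S, Psi p x (-d) := by
      simp only [hlam]
      exact Finset.sum_fiberwise S (fun y => f y) (fun d => Psi p x (-d))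
    have h2 : Psi p x (-(0 : Fin (2 * m) → ZMod p)) + ∑ d ∈ S, Psi p x (-d) = ∑ d : Fin (2 * m) → ZMod p, Psi p x (-d) :=
      Finset.add_sum_erase Finset.univ (fun d => Psi p x (-d))
        (Finset.mem_univ (0 : Fin (2 * m) → ZMod p))
    have h3 : ∑ d : Fin (2 * m) → ZMod p, Psi p x (-d) = ∑ d : Fin (2 * m) → ZMod p, Psi p x d :=
      Fintype.sum_bijective (fun d : Fin (2 * m) → ZMod p => -d) neg_involutive.bijective
        (fun d => Psi p x (-d)) (fun d => Psi p x d) (fun d => by simp)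
    have h4 : ∑ d : Fin (2 * m) → ZMod p, Psi p x d = 0 := sum_Psi p hx
    rw [h1]
    have h2' := h2
    rw [h3, h4, neg_zero, AddChar.map_zero_eq_one] at h2'
    linear_combination h2'
  -- the eigenvector property
  have heigen : ∀ (x : Fin (2 * m) → ZMod p) (j : ZMod p),
      (cayleyGraph f j).adjMatrix ℂ *ᵥ (fun y => Psi p x y)
        = fun u => lam x j * Psi p x u := by
    intro x j
    funext u
    rw [SimpleGraph.adjMatrix_mulVec_apply]
    have hnb : (cayleyGraph f j).neighborFinset u
        = (D j).image (fun d => u - d) := by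
      ext w
      rw [SimpleGraph.mem_neighborFinset, Finset.mem_image]
      constructor
      · intro hadj
        rw [cayleyGraph, SimpleGraph.fromRel_adj] at hadj
        refine ⟨u - w, ?_, sub_sub_cancel u w⟩
        rw [hmemD]
        constructor
        · exact sub_ne_zero.mpr hadj.1
        · rcases hadj.2 with h | h
          · exact h
          · rw [← heven (w - u), neg_sub] at h; exact h
      · rintro ⟨d, hd, rfl⟩
        rw [hmemD] at hd
        rw [cayleyGraph, SimpleGraph.fromRel_adj]
        constructor
        · intro h
          exact hd.1 (by linear_combination h)
        · left
          rw [show u - (u - d) = d by ring]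
          exact hd.2
    rw [hnb, Finset.sum_image (by
      intro a _ b _ hab
      have : u - (u - a) = u - (u - b) := by simp only at hab; rw [hab]
      simpa using this)]
    rw [hlam, Finset.sum_mul]
    refine Finset.sum_congr rfl (fun d _ => ?_)
    rw [show u - d = (-d) + u by ring, AddChar.map_add_eq_mul]
  -- the quadratic constraint on lam x j for x ≠ 0
  have hdichot : ∀ (x : Fin (2 * m) → ZMod p), x ≠ 0 → ∀ j : ZMod p,
      lam x j = -(R j : ℂ) ∨ lam x j = (N : ℂ) - (R j : ℂ) := by
    intro x hx j
    obtain ⟨k, l, mu, hk, hl, hmu, hsrg⟩ := hSRG j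
    set G := cayleyGraph f j with hG
    set v : (Fin (2 * m) → ZMod p) → ℂ := fun y => Psi p x y with hv
    have hv0 : v 0 = 1 := by rw [hv]; exact AddChar.map_zero_eq_one _
    have hAv : G.adjMatrix ℂ *ᵥ v = lam x j • v := by
      rw [heigen x j]; funext u; simp [hv, smul_eq_mul]
    have hsumv : ∑ w : Fin (2 * m) → ZMod p, v w = 0 := sum_Psi p hx
    -- complement action
    have hCv : (Gᶜ.adjMatrix ℂ *ᵥ v) 0 = -1 - lam x j := by
      rw [SimpleGraph.adjMatrix_mulVec_apply]
      have hset : Gᶜ.neighborFinset 0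
          = (Finset.univ \ insert (0 : Fin (2 * m) → ZMod p) (G.neighborFinset 0)) := by
        ext w
        simp only [SimpleGraph.mem_neighborFinset, SimpleGraph.compl_adj,
          Finset.mem_sdiff, Finset.mem_univ, true_and, Finset.mem_insert,
          SimpleGraph.mem_neighborFinset]
        constructor
        · rintro ⟨h1, h2⟩ h3
          rcases h3 with h3 | h3
          · exact h1 h3.symm
          · exact h2 h3
        · intro h
          push_neg at h
          exact ⟨fun hh => h.1 hh.symm, h.2⟩
      rw [hset, Finset.sum_sdiff_eq_sub (Finset.subset_univ _), hsumv,
        Finset.sum_insert (by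
          simp only [SimpleGraph.mem_neighborFinset]
          exact G.irrefl), hv0]
      have : ∑ w ∈ G.neighborFinset 0, v w = (G.adjMatrix ℂ *ᵥ v) 0 := by
        rw [SimpleGraph.adjMatrix_mulVec_apply]
      rw [this, hAv]
      simp [hv0]
      ring
    -- the matrix identity evaluated on v at 0
    have hM := hsrg.matrix_eq (α := ℂ)
    have heq : (lam x j) ^ 2
        = (k : ℂ) + (l : ℂ) * lam x j + (mu : ℂ) * (-1 - lam x j) := by
      have happ := congrArg (fun M : Matrix (Fin (2 * m) → ZMod p) (Fin (2 * m) → ZMod p) ℂ => (M *ᵥ v) 0) hM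
      have hL : ((G.adjMatrix ℂ ^ 2) *ᵥ v) 0 = (lam x j) ^ 2 := by
        rw [pow_two, ← Matrix.mulVec_mulVec, hAv, Matrix.mulVec_smul, hAv]
        simp [hv0, pow_two]
      have hR1 : ((k • (1 : Matrix (Fin (2 * m) → ZMod p) (Fin (2 * m) → ZMod p) ℂ) + l • G.adjMatrix ℂ
          + mu • Gᶜ.adjMatrix ℂ) *ᵥ v) 0
          = (k : ℂ) + (l : ℂ) * lam x j + (mu : ℂ) * (-1 - lam x j) := by
        rw [Matrix.add_mulVec, Matrix.add_mulVec]
        have e1 : ((k • (1 : Matrix (Fin (2 * m) → ZMod p) (Fin (2 * m) → ZMod p) ℂ)) *ᵥ v) 0 = (k : ℂ) := by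
          rw [show (k • (1 : Matrix (Fin (2 * m) → ZMod p) (Fin (2 * m) → ZMod p) ℂ)) = ((k : ℂ) • (1 : Matrix (Fin (2 * m) → ZMod p) (Fin (2 * m) → ZMod p) ℂ)) from (Nat.cast_smul_eq_nsmul ℂ _ _).symm, Matrix.smul_mulVec, Matrix.one_mulVec]
          simp [hv0]
        have e2 : ((l • G.adjMatrix ℂ) *ᵥ v) 0 = (l : ℂ) * lam x j := by
          rw [show (l • G.adjMatrix ℂ) = ((l : ℂ) • G.adjMatrix ℂ) from (Nat.cast_smul_eq_nsmul ℂ _ _).symm, Matrix.smul_mulVec, hAv]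
          simp [hv0, smul_eq_mul]
        have e3 : ((mu • Gᶜ.adjMatrix ℂ) *ᵥ v) 0 = (mu : ℂ) * (-1 - lam x j) := by
          rw [show (mu • Gᶜ.adjMatrix ℂ) = ((mu : ℂ) • Gᶜ.adjMatrix ℂ) from (Nat.cast_smul_eq_nsmul ℂ _ _).symm, Matrix.smul_mulVec]
          simp only [Pi.smul_apply, smul_eq_mul, hCv]
        simp only [Pi.add_apply, e1, e2, e3]
      rw [hL, hR1] at happ
      exact happ
    have hk' : (k : ℂ) = ((N : ℂ) - 1) * (R j : ℂ) := by exact_mod_cast hk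
    have hl' : (l : ℂ) = (N : ℂ) + (R j : ℂ) ^ 2 - 3 * (R j : ℂ) := by exact_mod_cast hl
    have hmu' : (mu : ℂ) = (R j : ℂ) ^ 2 - (R j : ℂ) := by exact_mod_cast hmu
    rw [hk', hl', hmu'] at heq
    have hfac : (lam x j + (R j : ℂ)) * (lam x j - ((N : ℂ) - (R j : ℂ))) = 0 := by
      linear_combination heq
    rcases mul_eq_zero.mp hfac with h | h
    · left; linear_combination h
    · right; linear_combination h
  -- the master claim
  have master : ∀ x : Fin (2 * m) → ZMod p, ∃ j : ZMod p, walsh f x = (N : ℂ) * zeta p ^ j.val := by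
    intro x
    by_cases hx : x = 0
    · -- x = 0 : walsh f 0 = N
      refine ⟨0, ?_⟩
      subst hx
      have hlam0 : ∀ j : ZMod p, lam 0 j = ((D j).card : ℂ) := by
        intro j
        simp only [hlam]
        have : ∀ d ∈ D j, Psi p (0 : Fin (2 * m) → ZMod p) (-d) = 1 := by
          intro d _
          rw [Psi_apply]
          have : ip (0 : Fin (2 * m) → ZMod p) (-d) = 0 := by simp [ip]
          rw [this, AddChar.map_zero_eq_one]
        rw [Finset.sum_congr rfl this, Finset.sum_const, nsmul_eq_mul, mul_one]
      have hcard : ∀ j : ZMod p, ((D j).card : ℂ) = ((N : ℂ) - 1) * (R j : ℂ) := by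
        intro j
        obtain ⟨k, l, mu, hk, _, _, hsrg⟩ := hSRG j
        have hnb : (cayleyGraph f j).neighborFinset 0 = D j := by
          ext w
          rw [SimpleGraph.mem_neighborFinset, cayleyGraph, SimpleGraph.fromRel_adj,
            hmemD]
          constructor
          · rintro ⟨h1, h2⟩
            refine ⟨fun hh => h1 hh.symm, ?_⟩
            rcases h2 with h | h
            · rw [show (0 : Fin (2 * m) → ZMod p) - w = -w by ring, heven] at h; exact h
            · rw [show w - (0 : Fin (2 * m) → ZMod p) = w by ring] at h; exact h
          · rintro ⟨h1, h2⟩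
            refine ⟨fun hh => h1 hh.symm, Or.inr ?_⟩
            rw [show w - (0 : Fin (2 * m) → ZMod p) = w by ring]; exact h2
        have hdeg := hsrg.regular 0
        rw [SimpleGraph.degree, hnb] at hdeg
        rw [hdeg]
        exact_mod_cast hk
      rw [hwalsh 0]
      have : ∑ j : ZMod p, psi p j * lam (0 : Fin (2 * m) → ZMod p) j
          = ((N : ℂ) - 1) * ∑ j : ZMod p, psi p j * (R j : ℂ) := by
        rw [Finset.mul_sum]
        refine Finset.sum_congr rfl (fun j _ => ?_)
        rw [hlam0, hcard]
        ring
      rw [this, hpsiR, mul_one]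
      have : ((0 : ZMod p)).val = 0 := ZMod.val_zero
      rw [this, pow_zero, mul_one]
      ring
    · -- x ≠ 0
      set T : Finset (ZMod p) :=
        Finset.univ.filter (fun j => lam x j = (N : ℂ) - (R j : ℂ)) with hT
      have hterm : ∀ j : ZMod p,
          lam x j + (R j : ℂ) = if j ∈ T then (N : ℂ) else 0 := by
        intro j
        by_cases hj : j ∈ T
        · rw [if_pos hj]
          rw [hT, Finset.mem_filter] at hj
          rw [hj.2]; ring
        · rw [if_neg hj]
          rcases hdichot x hx j with h | h
          · rw [h]; ring
          · exact absurd (Finset.mem_filter.mpr ⟨Finset.mem_univ j, h⟩) hj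
      have hsum1 : ∑ j : ZMod p, (lam x j + (R j : ℂ)) = (N : ℂ) := by
        rw [Finset.sum_add_distrib, hlamsum x hx]
        have : ∑ j : ZMod p, ((R j : ℤ) : ℂ) = ((N : ℂ) + 1) := by
          rw [← Int.cast_sum, hRsum]; push_cast; ring
        rw [this]; ring
      have hsum2 : ∑ j : ZMod p, (lam x j + (R j : ℂ)) = (T.card : ℂ) * N := by
        rw [Finset.sum_congr rfl (fun j _ => hterm j)]
        rw [Finset.sum_ite_mem, Finset.univ_inter, Finset.sum_const, nsmul_eq_mul]
      have hcard1 : T.card = 1 := by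
        have : (T.card : ℂ) * N = 1 * N := by rw [← hsum2, hsum1, one_mul]
        have := mul_right_cancel₀ hNneC this
        exact_mod_cast this
      obtain ⟨j₀, hj₀⟩ := Finset.card_eq_one.mp hcard1
      refine ⟨j₀, ?_⟩
      have hj₀T : j₀ ∈ T := hj₀ ▸ Finset.mem_singleton_self j₀
      have hlamval : ∀ j : ZMod p,
          lam x j = -(R j : ℂ) + (if j = j₀ then (N : ℂ) else 0) := by
        intro j
        by_cases hj : j = j₀
        · subst hj
          rw [if_pos rfl]
          rw [hT, Finset.mem_filter] at hj₀T
          rw [hj₀T.2]; ring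
        · rw [if_neg hj]
          rcases hdichot x hx j with h | h
          · rw [h]; ring
          · exfalso
            apply hj
            have : j ∈ T := Finset.mem_filter.mpr ⟨Finset.mem_univ j, h⟩
            rw [hj₀] at this
            exact Finset.mem_singleton.mp this
      rw [hwalsh x]
      have : ∑ j : ZMod p, psi p j * lam x j
          = -(∑ j : ZMod p, psi p j * (R j : ℂ)) + psi p j₀ * (N : ℂ) := by
        have expand : ∀ j : ZMod p, psi p j * lam x j
            = -(psi p j * (R j : ℂ)) + (if j = j₀ then psi p j * (N : ℂ) else 0) := by
          intro j
          rw [hlamval j]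
          split_ifs with h <;> ring
        rw [Finset.sum_congr rfl (fun j _ => expand j), Finset.sum_add_distrib,
          Finset.sum_neg_distrib]
        congr 1
        rw [Finset.sum_ite_eq' Finset.univ j₀ (fun j => psi p j * (N : ℂ))]
        simp
      rw [this, hpsiR, psi_apply]
      ring
  -- conclude
  obtain ⟨g, hg⟩ := Classical.axiomOfChoice master
  constructor
  · intro hNpos
    refine ⟨g, fun x => ?_⟩
    rw [hg x, hNpos]
    push_cast
    ring
  · intro hNneg
    refine ⟨g, fun x => ?_⟩
    rw [hg x, hNneg]
    push_cast
    ring
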